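/- Let Γ be a totally ordered abelian group, let A be a subgroup (or submonoid) of Γ with A nonpositive (every element ≤ 0) and A - A = ℤα for some positive α ∈ Γ. Then there exists an integer n such that for all integers k ≤ n, the element kα belongs to A. -/

import Mathlib

/-- If `A` is a nonpositive submonoid of a totally ordered abelian group `Γ` with
`A - A = ℤα` for a positive `α`, then there is an integer `n` such that `k • α ∈ A`
for all integers `k ≤ n`. -/
theorem stmt0 {Γ : Type*} [AddCommGroup Γ] [LinearOrder Γ] [IsOrderedAddMonoid Γ] (A : AddSubmonoid Γ)
    (α : Γ) (hα : 0 < α)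
    (hnonpos : ∀ a ∈ A, a ≤ 0)
    (hdiff : {γ : Γ | ∃ a ∈ A, ∃ b ∈ A, γ = a - b} = Set.range (fun n : ℤ => n • α)) :
    ∃ n : ℤ, ∀ k : ℤ, k ≤ n → k • α ∈ A := by
  have hsm : StrictMono fun n : ℤ => n • α := zsmul_left_strictMono hα
  -- every element of A is a multiple of α
  have hrep : ∀ c ∈ A, ∃ p : ℤ, c = p • α := by
    intro c hc
    have : c ∈ {γ : Γ | ∃ a ∈ A, ∃ b ∈ A, γ = a - b} := ⟨c, hc, 0, A.zero_mem, by simp⟩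
    rw [hdiff] at this
    obtain ⟨p, hp⟩ := this
    exact ⟨p, hp.symm⟩
  have hα1 : α ∈ {γ : Γ | ∃ a ∈ A, ∃ b ∈ A, γ = a - b} := by
    rw [hdiff]; exact ⟨1, one_zsmul α⟩
  obtain ⟨a, ha, b, hb, hab⟩ := hα1
  obtain ⟨p, hp⟩ := hrep a ha
  obtain ⟨q, hq⟩ := hrep b hb
  have hpq : p = q + 1 := by
    have : (q + 1) • α = p • α := by
      rw [add_zsmul, one_zsmul, ← hp, ← hq, hab]; abel
    exact (hsm.injective this).symm
  have hp0 : p ≤ 0 := by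
    have : p • α ≤ (0 : ℤ) • α := by rw [zero_zsmul, ← hp]; exact hnonpos a ha
    exact hsm.le_iff_le.mp this
  have hq1 : q ≤ -1 := by omega
  refine ⟨-(q * q), fun k hk => ?_⟩
  set x : ℤ := k % (-q) with hxdef
  set d : ℤ := k / (-q) with hddef
  have hqpos : (0:ℤ) < -q := by omega
  have hx0 : 0 ≤ x := Int.emod_nonneg k (by omega)
  have hxlt : x < -q := Int.emod_lt_of_pos k hqpos
  have hk' : -q * d + x = k := Int.mul_ediv_add_emod k (-q)
  set y : ℤ := -d - x with hydef
  have hy0 : 0 ≤ y := by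
    -- need -d ≥ x, i.e. (-d) * (-q) ≥ x * (-q), i.e. x - k ≥ x * (-q)
    have h1 : x * (-q) ≤ (-d) * (-q) := by nlinarith
    have h2 : x ≤ -d := le_of_mul_le_mul_right h1 hqpos
    omega
  have key : x * p + y * q = k := by
    rw [hpq, hydef]; ring_nf; linarith [hk']
  have hxA : x • a ∈ A := by
    have := A.nsmul_mem ha x.toNat
    rwa [← natCast_zsmul, Int.toNat_of_nonneg hx0] at this
  have hyA : y • b ∈ A := by
    have := A.nsmul_mem hb y.toNat
    rwa [← natCast_zsmul, Int.toNat_of_nonneg hy0] at this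
  have heq : k • α = x • a + y • b := by
    rw [hp, hq, smul_smul, smul_smul, ← add_smul, key]
  rw [heq]
  exact A.add_mem hxA hyA
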